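/- arXiv:2206.12960 — 3 statements merged into one kernel-verified Lean document; each statement's English description precedes it below -/
import Mathlib

section
/- Let μ, μ' be strictly monotone maps Fin u → Fin w (respectively Fin u → Fin w') and ν, ν' strictly monotone maps Fin v → Fin w (respectively Fin v → Fin w'), such that range(μ) ∪ range(ν) = Fin w (i.e. all of {0,...,w-1}) and range(μ') ∪ range(ν') covers all of Fin w'. If there exist strictly monotone maps ε : Fin w → Fin W and ε' : Fin w' → Fin W with ε ∘ μ = ε' ∘ μ' and ε ∘ ν = ε' ∘ ν', then w = w', ε = ε', μ = μ' and ν = ν'. -/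
theorem stmt_4 {u v w w' W : ℕ}
    (μ : Fin u → Fin w) (ν : Fin v → Fin w)
    (μ' : Fin u → Fin w') (ν' : Fin v → Fin w')
    (hμ : StrictMono μ) (hν : StrictMono ν) (hμ' : StrictMono μ') (hν' : StrictMono ν')
    (hcov : Finset.image μ Finset.univ ∪ Finset.image ν Finset.univ = Finset.univ)
    (hcov' : Finset.image μ' Finset.univ ∪ Finset.image ν' Finset.univ = Finset.univ)
    (ε : Fin w → Fin W) (ε' : Fin w' → Fin W)
    (hε : StrictMono ε) (hε' : StrictMono ε')
    (h1 : ε ∘ μ = ε' ∘ μ') (h2 : ε ∘ ν = ε' ∘ ν') :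
    w = w' ∧ HEq ε ε' ∧ HEq μ μ' ∧ HEq ν ν' := by
  have himg : Finset.image ε Finset.univ = Finset.image ε' Finset.univ := by
    calc Finset.image ε Finset.univ
        = Finset.image ε (Finset.image μ Finset.univ ∪ Finset.image ν Finset.univ) := by
          rw [hcov]
      _ = Finset.image (ε ∘ μ) Finset.univ ∪ Finset.image (ε ∘ ν) Finset.univ := by
          rw [Finset.image_union, Finset.image_image, Finset.image_image]
      _ = Finset.image (ε' ∘ μ') Finset.univ ∪ Finset.image (ε' ∘ ν') Finset.univ := by
          rw [h1, h2]
      _ = Finset.image ε' (Finset.image μ' Finset.univ ∪ Finset.image ν' Finset.univ) := by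
          rw [Finset.image_union, Finset.image_image, Finset.image_image]
      _ = Finset.image ε' Finset.univ := by rw [hcov']
  have hww' : w = w' := by
    have c1 : (Finset.image ε Finset.univ).card = w := by
      rw [Finset.card_image_of_injective _ hε.injective, Finset.card_univ, Fintype.card_fin]
    have c2 : (Finset.image ε' Finset.univ).card = w' := by
      rw [Finset.card_image_of_injective _ hε'.injective, Finset.card_univ, Fintype.card_fin]
    rw [← c1, himg, c2]
  subst hww'
  have hcard : (Finset.image ε Finset.univ).card = w := by
    rw [Finset.card_image_of_injective _ hε.injective, Finset.card_univ, Fintype.card_fin]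
  have hεε' : ε = ε' := by
    have e1 := Finset.orderEmbOfFin_unique hcard (fun x => Finset.mem_image_of_mem ε (Finset.mem_univ x)) hε
    have e2 := Finset.orderEmbOfFin_unique hcard
      (fun x => himg ▸ Finset.mem_image_of_mem ε' (Finset.mem_univ x)) hε'
    exact e1.trans e2.symm
  subst hεε'
  have hμμ' : μ = μ' := by
    funext x
    exact hε.injective (congrFun h1 x)
  have hνν' : ν = ν' := by
    funext x
    exact hε.injective (congrFun h2 x)
  exact ⟨rfl, HEq.rfl, heq_of_eq hμμ', heq_of_eq hνν'⟩
end

section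
/- Let R be a commutative ring, F a finitely generated free R-module with basis e₁,...,eₙ, and φ : F → R an R-linear map such that φ(e₁),...,φ(eₙ) is a regular sequence on R. Then the Koszul complex K(φ) is exact in positive homological degrees, i.e., its homology Hᵢ vanishes for all i ≥ 1. -/
open ExteriorAlgebra in
/-- The wedge `v 0 ∧ ⋯ ∧ v (d-1)` as an element of the `d`-th exterior power
`⋀[R]^d M` (realized in Mathlib as a submodule of the exterior algebra). -/
noncomputable def wedge (R : Type*) {M : Type*} [CommRing R] [AddCommGroup M] [Module R M]
    (d : ℕ) (v : Fin d → M) : ⋀[R]^d M :=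
  ⟨ιMulti R d v, ιMulti_range R d ⟨v, rfl⟩⟩

namespace KoszulAux

abbrev KIdx (n d : ℕ) := {s : Finset (Fin n) // s.card = d}

abbrev KMod (R : Type*) [CommRing R] (n d : ℕ) := KIdx n d →₀ R

variable {R : Type*} [CommRing R] {n : ℕ}

def sgn (s : Finset (Fin n)) (i : Fin n) : R := (-1 : R) ^ (s.filter (· < i)).card

lemma sgn_erase {s : Finset (Fin n)} {i j : Fin n} (hi : i ∈ s) :
    (sgn (s.erase i) j : R) = if i < j then -sgn s j else sgn s j := by
  have hfe : (s.erase i).filter (· < j) = (s.filter (· < j)).erase i :=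
    Finset.filter_erase _ _ _
  by_cases hlt : i < j
  · have hmem : i ∈ s.filter (· < j) := Finset.mem_filter.2 ⟨hi, hlt⟩
    have hc : ((s.filter (· < j)).erase i).card = (s.filter (· < j)).card - 1 :=
      Finset.card_erase_of_mem hmem
    have hpos : 1 ≤ (s.filter (· < j)).card := Finset.card_pos.2 ⟨i, hmem⟩
    have h1 : (s.filter (· < j)).card = ((s.filter (· < j)).card - 1) + 1 :=
      (Nat.succ_pred_eq_of_pos hpos).symm
    rw [if_pos hlt, sgn, sgn, hfe, hc]
    conv_rhs => rw [h1]
    rw [pow_succ]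
    ring
  · have he : (s.filter (· < j)).erase i = s.filter (· < j) := by
      apply Finset.erase_eq_of_notMem
      simp only [Finset.mem_filter, not_and]
      intro _; exact hlt
    rw [if_neg hlt, sgn, sgn, hfe, he]

lemma sgn_antisym {s : Finset (Fin n)} {i j : Fin n} (hi : i ∈ s) (hj : j ∈ s) (hij : i ≠ j) :
    (sgn s i * sgn (s.erase i) j : R) = -(sgn s j * sgn (s.erase j) i) := by
  rcases lt_or_gt_of_ne hij with h | h
  · rw [sgn_erase hi, sgn_erase hj, if_pos h, if_neg (asymm h)]
    ring
  · rw [sgn_erase hi, sgn_erase hj, if_neg (asymm h), if_pos h]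
    ring

def KIdx.erase {d : ℕ} (s : KIdx n (d+1)) (i : Fin n) (h : i ∈ s.1) : KIdx n d :=
  ⟨s.1.erase i, by simp [Finset.card_erase_of_mem h, s.2]⟩

variable (x : Fin n → R)

noncomputable def Esing {d : ℕ} (s : KIdx n (d+1)) : KMod R n d :=
  ∑ i : Fin n, if h : i ∈ s.1 then (sgn s.1 i * x i) • Finsupp.single (s.erase i h) 1 else 0

noncomputable def Kd (d : ℕ) : KMod R n (d+1) →ₗ[R] KMod R n d :=
  Finsupp.lsum R fun s => LinearMap.toSpanSingleton R _ (Esing x s)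

lemma Kd_single {d : ℕ} (s : KIdx n (d+1)) (r : R) :
    Kd x d (Finsupp.single s r) = r • Esing x s := by
  simp [Kd, Finsupp.sum_single_index, LinearMap.toSpanSingleton_apply]

lemma Kd_Esing {d : ℕ} (s : KIdx n (d+1+1)) : Kd x d (Esing x s) = 0 := by
  rw [Esing, map_sum]
  have step : ∀ i : Fin n,
      Kd x d (if h : i ∈ s.1 then (sgn s.1 i * x i) • Finsupp.single (s.erase i h) 1 else 0)
      = ∑ j : Fin n, (if h : i ∈ s.1 then
          (if h' : j ∈ (s.erase i h).1 then
            ((sgn s.1 i * x i) * (sgn (s.1.erase i) j * x j)) •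
              Finsupp.single ((s.erase i h).erase j h') 1 else 0) else 0) := by
    intro i
    by_cases h : i ∈ s.1
    · simp only [dif_pos h, map_smul, Kd_single, one_smul, Esing, Finset.smul_sum]
      refine Finset.sum_congr rfl fun j _ => ?_
      by_cases h' : j ∈ (s.erase i h).1
      · rw [dif_pos h', dif_pos h', smul_smul]
        rfl
      · rw [dif_neg h', dif_neg h', smul_zero]
    · simp [dif_neg h]
  rw [Finset.sum_congr rfl fun i _ => step i]
  rw [← Finset.sum_product' (s := Finset.univ) (t := Finset.univ)]
  apply Finset.sum_involution (fun p _ => Prod.swap p)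
  · rintro ⟨i, j⟩ -
    dsimp only [Prod.swap]
    by_cases hij : i = j
    · subst hij
      by_cases h : i ∈ s.1
      · rw [dif_pos h, dif_neg (by simp [KIdx.erase]), add_zero]
      · rw [dif_neg h, add_zero]
    · by_cases hi : i ∈ s.1 <;> by_cases hj : j ∈ s.1
      · have hi' : i ∈ (s.erase j hj).1 := Finset.mem_erase.2 ⟨hij, hi⟩
        have hj' : j ∈ (s.erase i hi).1 := Finset.mem_erase.2 ⟨fun e => hij e.symm, hj⟩
        rw [dif_pos hi, dif_pos hj, dif_pos hj', dif_pos hi']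
        have hsets : (s.erase i hi).erase j hj' = (s.erase j hj).erase i hi' :=
          Subtype.ext (Finset.erase_right_comm)
        rw [hsets]
        rw [← add_smul]
        convert zero_smul R _
        have := sgn_antisym (R := R) hi hj hij
        ring_nf
        linear_combination (x i * x j) * this
      · rw [dif_neg hj, add_zero, dif_pos hi,
          dif_neg (show ¬ j ∈ (s.erase i hi).1 from fun hh => hj (Finset.mem_of_mem_erase hh))]
      · rw [dif_neg hi, zero_add, dif_pos hj,
          dif_neg (show ¬ i ∈ (s.erase j hj).1 from fun hh => hi (Finset.mem_of_mem_erase hh))]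
      · rw [dif_neg hi, dif_neg hj, add_zero]
  · rintro ⟨i, j⟩ - hne hp
    have hij : j = i := congrArg Prod.fst hp
    apply hne
    subst hij
    by_cases h : j ∈ s.1
    · rw [dif_pos h, dif_neg (by simp [KIdx.erase])]
    · rw [dif_neg h]
  · rintro ⟨i, j⟩ -; exact Finset.mem_univ _
  · rintro ⟨i, j⟩ -; rfl

lemma Kd_Kd {d : ℕ} (z : KMod R n (d+1+1)) : Kd x d (Kd x (d+1) z) = 0 := by
  induction z using Finsupp.induction_linear with
  | zero => simp
  | add a b ha hb => rw [map_add, map_add, ha, hb, add_zero]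
  | single s r => rw [Kd_single, map_smul, Kd_Esing, smul_zero]


/-! ### Submodules of elements supported below `m` -/

noncomputable def Mm (m d : ℕ) : Submodule R (KMod R n d) :=
  Submodule.span R {f | ∃ s : KIdx n d, (∀ i ∈ s.1, (i : ℕ) < m) ∧ f = Finsupp.single s 1}

lemma Mm_mono {m m' d : ℕ} (h : m ≤ m') : Mm (R := R) (n := n) m d ≤ Mm m' d := by
  apply Submodule.span_mono
  rintro f ⟨s, hs, rfl⟩
  exact ⟨s, fun i hi => lt_of_lt_of_le (hs i hi) h, rfl⟩

lemma single_mem_Mm {m d : ℕ} (s : KIdx n d) (hs : ∀ i ∈ s.1, (i : ℕ) < m) :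
    (Finsupp.single s 1 : KMod R n d) ∈ Mm m d :=
  Submodule.subset_span ⟨s, hs, rfl⟩

lemma Kd_mem_Mm {m d : ℕ} : ∀ c ∈ Mm (R := R) m (d+1), Kd x d c ∈ Mm m d := by
  intro c hc
  induction hc using Submodule.span_induction with
  | mem f hf =>
    obtain ⟨s, hs, rfl⟩ := hf
    rw [Kd_single, one_smul, Esing]
    apply Submodule.sum_mem
    intro i _
    by_cases h : i ∈ s.1
    · rw [dif_pos h]
      exact Submodule.smul_mem _ _ (single_mem_Mm _ fun j hj =>
        hs j (Finset.mem_of_mem_erase hj))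
    · rw [dif_neg h]; exact Submodule.zero_mem _
  | zero => rw [map_zero]; exact Submodule.zero_mem _
  | add a b _ _ ha hb => rw [map_add]; exact Submodule.add_mem _ ha hb
  | smul r a _ ha => rw [map_smul]; exact Submodule.smul_mem _ _ ha

/-! ### The maps `lam`, `Pi'`, `mu` associated to an index `ℓ` -/

variable (ℓ : Fin n)

def KIdx.ins {d : ℕ} (s : KIdx n d) (h : ℓ ∉ s.1) : KIdx n (d+1) :=
  ⟨Insert.insert ℓ s.1, by rw [Finset.card_insert_of_notMem h, s.2]⟩

noncomputable def lam (d : ℕ) : KMod R n d →ₗ[R] KMod R n (d+1) :=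
  Finsupp.lsum R fun s => LinearMap.toSpanSingleton R _
    (if h : ℓ ∈ s.1 then 0 else Finsupp.single (KIdx.ins ℓ s h) 1)

noncomputable def Pi' (d : ℕ) : KMod R n d →ₗ[R] KMod R n d :=
  Finsupp.lsum R fun s => LinearMap.toSpanSingleton R _
    (if ℓ ∈ s.1 then Finsupp.single s 1 else 0)

noncomputable def mu (d : ℕ) : KMod R n (d+1) →ₗ[R] KMod R n d :=
  Finsupp.lsum R fun s => LinearMap.toSpanSingleton R _
    (if h : ℓ ∈ s.1 then Finsupp.single (KIdx.erase s ℓ h) 1 else 0)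

lemma lam_single {d : ℕ} (s : KIdx n d) (r : R) :
    lam (R := R) ℓ d (Finsupp.single s r) =
      r • (if h : ℓ ∈ s.1 then 0 else Finsupp.single (KIdx.ins ℓ s h) 1) := by
  simp [lam, Finsupp.sum_single_index, LinearMap.toSpanSingleton_apply]

lemma Pi'_single {d : ℕ} (s : KIdx n d) (r : R) :
    Pi' (R := R) ℓ d (Finsupp.single s r) =
      r • (if ℓ ∈ s.1 then Finsupp.single s 1 else 0) := by
  simp [Pi', Finsupp.sum_single_index, LinearMap.toSpanSingleton_apply]

lemma mu_single {d : ℕ} (s : KIdx n (d+1)) (r : R) :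
    mu (R := R) ℓ d (Finsupp.single s r) =
      r • (if h : ℓ ∈ s.1 then Finsupp.single (KIdx.erase s ℓ h) 1 else 0) := by
  simp [mu, Finsupp.sum_single_index, LinearMap.toSpanSingleton_apply]

variable {m : ℕ} (hm : (ℓ : ℕ) = m)

include hm

lemma notMem_of_Mm {s : KIdx n d} (hs : ∀ i ∈ s.1, (i : ℕ) < m) : ℓ ∉ s.1 := by
  intro h
  exact absurd (hs ℓ h) (by omega)

lemma mu_lam {d : ℕ} : ∀ c ∈ Mm (R := R) m d, mu ℓ d (lam ℓ d c) = c := by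
  intro c hc
  induction hc using Submodule.span_induction with
  | mem f hf =>
    obtain ⟨s, hs, rfl⟩ := hf
    have h := notMem_of_Mm ℓ hm hs
    rw [lam_single, one_smul, dif_neg h, mu_single, one_smul,
      dif_pos (show ℓ ∈ (KIdx.ins ℓ s h).1 from Finset.mem_insert_self ℓ s.1)]
    congr 1
    exact Subtype.ext (Finset.erase_insert h)
  | zero => simp
  | add a b _ _ ha hb => rw [map_add, map_add, ha, hb]
  | smul r a _ ha => rw [map_smul, map_smul, ha]

lemma Pi'_lam {d : ℕ} : ∀ c ∈ Mm (R := R) m d, Pi' ℓ (d+1) (lam ℓ d c) = lam ℓ d c := by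
  intro c hc
  induction hc using Submodule.span_induction with
  | mem f hf =>
    obtain ⟨s, hs, rfl⟩ := hf
    have h := notMem_of_Mm ℓ hm hs
    rw [lam_single, one_smul, dif_neg h, Pi'_single, one_smul,
      if_pos (show ℓ ∈ (KIdx.ins ℓ s h).1 from Finset.mem_insert_self ℓ s.1)]
  | zero => simp
  | add a b _ _ ha hb => rw [map_add, map_add, ha, hb]
  | smul r a _ ha => rw [map_smul, map_smul, ha]

lemma Pi'_eq_zero {d : ℕ} : ∀ c ∈ Mm (R := R) m d, Pi' ℓ d c = 0 := by
  intro c hc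
  induction hc using Submodule.span_induction with
  | mem f hf =>
    obtain ⟨s, hs, rfl⟩ := hf
    have h := notMem_of_Mm ℓ hm hs
    rw [Pi'_single, one_smul, if_neg h]
  | zero => simp
  | add a b _ _ ha hb => rw [map_add, ha, hb, add_zero]
  | smul r a _ ha => rw [map_smul, ha, smul_zero]

lemma lam_mem {d : ℕ} : ∀ c ∈ Mm (R := R) m d, lam ℓ d c ∈ Mm (m+1) (d+1) := by
  intro c hc
  induction hc using Submodule.span_induction with
  | mem f hf =>
    obtain ⟨s, hs, rfl⟩ := hf
    have h := notMem_of_Mm ℓ hm hs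
    rw [lam_single, one_smul, dif_neg h]
    apply single_mem_Mm
    intro i hi
    rcases Finset.mem_insert.1 (show i ∈ Insert.insert ℓ s.1 from hi) with rfl | hi
    · omega
    · exact lt_of_lt_of_le (hs i hi) (Nat.le_succ m)
  | zero => rw [map_zero]; exact Submodule.zero_mem _
  | add a b _ _ ha hb => rw [map_add]; exact Submodule.add_mem _ ha hb
  | smul r a _ ha => rw [map_smul]; exact Submodule.smul_mem _ _ ha


lemma Kd_lam {d : ℕ} : ∀ c ∈ Mm (R := R) m (d+1),
    Kd x (d+1) (lam ℓ (d+1) c) =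
      ((-1 : R)^(d+1) * x ℓ) • c + lam ℓ d (Kd x d c) := by
  intro c hc
  induction hc using Submodule.span_induction with
  | mem f hf =>
    obtain ⟨s, hs, rfl⟩ := hf
    have h := notMem_of_Mm ℓ hm hs
    have hlt : ∀ i ∈ s.1, i < ℓ := by
      intro i hi
      rw [Fin.lt_def, hm]
      exact hs i hi
    rw [lam_single, one_smul, dif_neg h, Kd_single, one_smul, Esing]
    have key : ∀ i : Fin n,
        (if h' : i ∈ (KIdx.ins ℓ s h).1 then
          (sgn (KIdx.ins ℓ s h).1 i * x i) • Finsupp.single ((KIdx.ins ℓ s h).erase i h') 1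
          else 0)
        = (if i = ℓ then ((-1 : R)^(d+1) * x ℓ) • (Finsupp.single s 1 : KMod R n (d+1)) else 0)
          + (if hi : i ∈ s.1 then (sgn s.1 i * x i) •
              (Finsupp.single (KIdx.ins ℓ (s.erase i hi)
                (fun hh => h (Finset.mem_of_mem_erase hh))) 1 : KMod R n (d+1)) else 0) := by
      intro i
      by_cases hiℓ : i = ℓ
      · simp only [hiℓ]
        simp only [if_true]
        rw [dif_neg h, add_zero,
          dif_pos (show ℓ ∈ (KIdx.ins ℓ s h).1 from Finset.mem_insert_self ℓ s.1)]
        have h1 : (KIdx.ins ℓ s h).erase ℓ (Finset.mem_insert_self ℓ s.1) = s :=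
          Subtype.ext (Finset.erase_insert h)
        have h2 : (sgn (KIdx.ins ℓ s h).1 ℓ : R) = (-1 : R)^(d+1) := by
          rw [sgn]
          have heq : (KIdx.ins ℓ s h).1.filter (· < ℓ) = s.1 := by
            rw [show (KIdx.ins ℓ s h).1 = Insert.insert ℓ s.1 from rfl,
              Finset.filter_insert, if_neg (lt_irrefl ℓ)]
            exact Finset.filter_true_of_mem hlt
          rw [heq, s.2]
        rw [h1, h2]
      · rw [if_neg hiℓ, zero_add]
        by_cases hi : i ∈ s.1
        · have hit : i ∈ (KIdx.ins ℓ s h).1 := Finset.mem_insert_of_mem hi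
          rw [dif_pos hit, dif_pos hi]
          have h1 : (KIdx.ins ℓ s h).erase i hit
              = KIdx.ins ℓ (s.erase i hi) (fun hh => h (Finset.mem_of_mem_erase hh)) :=
            Subtype.ext (Finset.erase_insert_of_ne (fun e => hiℓ e.symm))
          have h2 : (sgn (KIdx.ins ℓ s h).1 i : R) = sgn s.1 i := by
            rw [sgn, sgn, show (KIdx.ins ℓ s h).1 = Insert.insert ℓ s.1 from rfl,
              Finset.filter_insert, if_neg (not_lt_of_gt (hlt i hi))]
          rw [h1, h2]
        · have hit : i ∉ (KIdx.ins ℓ s h).1 := by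
            simp only [show (KIdx.ins ℓ s h).1 = Insert.insert ℓ s.1 from rfl,
              Finset.mem_insert, not_or]
            exact ⟨hiℓ, hi⟩
          rw [dif_neg hit, dif_neg hi]
    rw [Finset.sum_congr rfl fun i _ => key i, Finset.sum_add_distrib]
    congr 1
    · rw [Finset.sum_ite_eq' Finset.univ ℓ
        (fun _ => ((-1 : R)^(d+1) * x ℓ) • Finsupp.single s 1), if_pos (Finset.mem_univ ℓ)]
    · rw [Kd_single, one_smul, Esing, map_sum]
      refine Finset.sum_congr rfl fun i _ => ?_
      by_cases hi : i ∈ s.1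
      · rw [dif_pos hi, dif_pos hi, map_smul, lam_single, one_smul,
          dif_neg (show ℓ ∉ (s.erase i hi).1 from fun hh => h (Finset.mem_of_mem_erase hh))]
      · rw [dif_neg hi, dif_neg hi, map_zero]
  | zero => simp
  | add a b _ _ ha hb =>
    rw [map_add, map_add, ha, hb, map_add, map_add, smul_add, add_add_add_comm]
  | smul r a _ ha =>
    rw [map_smul, map_smul, ha, smul_add, smul_smul, mul_comm r, smul_smul]
    congr 1
    rw [map_smul, map_smul]

lemma Kd_lam_zero : ∀ c ∈ Mm (R := R) m 0, Kd x 0 (lam ℓ 0 c) = x ℓ • c := by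
  intro c hc
  induction hc using Submodule.span_induction with
  | mem f hf =>
    obtain ⟨s, hs, rfl⟩ := hf
    have h := notMem_of_Mm ℓ hm hs
    have hse : s.1 = ∅ := Finset.card_eq_zero.mp s.2
    rw [lam_single, one_smul, dif_neg h, Kd_single, one_smul, Esing]
    rw [Finset.sum_eq_single_of_mem ℓ (Finset.mem_univ ℓ)]
    · rw [dif_pos (show ℓ ∈ (KIdx.ins ℓ s h).1 from Finset.mem_insert_self ℓ s.1)]
      have h1 : (KIdx.ins ℓ s h).erase ℓ (Finset.mem_insert_self ℓ s.1) = s :=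
        Subtype.ext (Finset.erase_insert h)
      have h2 : (sgn (KIdx.ins ℓ s h).1 ℓ : R) = 1 := by
        rw [sgn, show (KIdx.ins ℓ s h).1 = Insert.insert ℓ s.1 from rfl,
          Finset.filter_insert, if_neg (lt_irrefl ℓ), hse]
        simp
      rw [h1, h2, one_mul, Finsupp.smul_single, smul_eq_mul, mul_one]
    · intro i _ hiℓ
      rw [dif_neg]
      intro hit
      rcases Finset.mem_insert.1 (show i ∈ Insert.insert ℓ s.1 from hit) with rfl | hi
      · exact hiℓ rfl
      · rw [hse] at hi; exact absurd hi (Finset.notMem_empty i)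
  | zero => simp
  | add a b _ _ ha hb => rw [map_add, map_add, ha, hb, smul_add]
  | smul r a _ ha => rw [map_smul, map_smul, ha, smul_smul, smul_smul, mul_comm]

lemma Mm_succ_decomp {d : ℕ} : ∀ z ∈ Mm (R := R) (m+1) (d+1),
    ∃ a ∈ Mm m (d+1), ∃ b ∈ Mm m d, z = a + lam ℓ d b := by
  intro z hz
  induction hz using Submodule.span_induction with
  | mem f hf =>
    obtain ⟨s, hs, rfl⟩ := hf
    by_cases h : ℓ ∈ s.1
    · refine ⟨0, Submodule.zero_mem _, Finsupp.single (s.erase ℓ h) 1, ?_, ?_⟩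
      · apply single_mem_Mm
        intro i hi
        have hi' := Finset.mem_erase.1 hi
        have := hs i hi'.2
        have : (i : ℕ) ≠ m := by
          intro e
          exact hi'.1 (Fin.ext (by omega))
        omega
      · rw [lam_single, one_smul,
          dif_neg (show ℓ ∉ (s.erase ℓ h).1 from Finset.notMem_erase ℓ s.1), zero_add]
        congr 1
        exact (Subtype.ext (Finset.insert_erase h)).symm
    · refine ⟨Finsupp.single s 1, ?_, 0, Submodule.zero_mem _, by rw [map_zero, add_zero]⟩
      apply single_mem_Mm
      intro i hi
      have := hs i hi
      have : (i : ℕ) ≠ m := by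
        intro e
        exact h (by rwa [show ℓ = i from Fin.ext (by omega)])
      omega
  | zero => exact ⟨0, Submodule.zero_mem _, 0, Submodule.zero_mem _, by simp⟩
  | add a b ha' hb' ha hb =>
    obtain ⟨a1, ha1, b1, hb1, rfl⟩ := ha
    obtain ⟨a2, ha2, b2, hb2, rfl⟩ := hb
    exact ⟨a1 + a2, Submodule.add_mem _ ha1 ha2, b1 + b2, Submodule.add_mem _ hb1 hb2,
      by rw [map_add]; abel⟩
  | smul r a ha' ha =>
    obtain ⟨a1, ha1, b1, hb1, rfl⟩ := ha
    exact ⟨r • a1, Submodule.smul_mem _ _ ha1, r • b1, Submodule.smul_mem _ _ hb1,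
      by rw [map_smul, smul_add]⟩


omit hm

/-! ### Degree zero -/

def emptyIdx : KIdx n 0 := ⟨∅, Finset.card_empty⟩

lemma KIdx0_eq (s : KIdx n 0) : s = emptyIdx (n := n) :=
  Subtype.ext (Finset.card_eq_zero.mp s.2)

noncomputable def ev : KMod R n 0 →ₗ[R] R := Finsupp.lapply (emptyIdx (n := n))

lemma ev_single (s : KIdx n 0) (r : R) : ev (Finsupp.single s r) = r := by
  rw [KIdx0_eq s]
  simp [ev, Finsupp.single_eq_same]

lemma eq_single_ev (f : KMod R n 0) : f = Finsupp.single (emptyIdx (n := n)) (ev f) := by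
  ext a
  rw [KIdx0_eq a]
  simp [ev, Finsupp.single_eq_same]

def Jm (m : ℕ) : Ideal R := Ideal.span {r | ∃ i : Fin n, (i : ℕ) < m ∧ r = x i}

lemma ev_Kd_mem_Jm {m : ℕ} : ∀ c ∈ Mm (R := R) m 1, ev (Kd x 0 c) ∈ Jm x m := by
  intro c hc
  induction hc using Submodule.span_induction with
  | mem f hf =>
    obtain ⟨s, hs, rfl⟩ := hf
    rw [Kd_single, one_smul, Esing, map_sum]
    apply Submodule.sum_mem
    intro i _
    by_cases h : i ∈ s.1
    · rw [dif_pos h, map_smul, ev_single, smul_eq_mul, mul_one]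
      exact Ideal.mul_mem_left _ _ (Ideal.subset_span ⟨i, hs i h, rfl⟩)
    · rw [dif_neg h, map_zero]
      exact Submodule.zero_mem _
  | zero => rw [map_zero, map_zero]; exact Submodule.zero_mem _
  | add a b _ _ ha hb => rw [map_add, map_add]; exact Submodule.add_mem _ ha hb
  | smul r a _ ha => rw [map_smul, map_smul]; exact Submodule.smul_mem _ _ ha

lemma exists_Kd_of_mem_Jm {m : ℕ} {r : R} (hr : r ∈ Jm x m) :
    ∃ c ∈ Mm (R := R) m 1, Kd x 0 c = Finsupp.single (emptyIdx (n := n)) r := by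
  have hle : Jm x m ≤ Submodule.comap (Finsupp.lsingle (emptyIdx (n := n)))
      ((Mm (R := R) m 1).map (Kd x 0)) := by
    rw [Jm, Ideal.span_le]
    rintro _ ⟨i, him, rfl⟩
    have hsing : ({i} : Finset (Fin n)).card = 1 := Finset.card_singleton i
    refine ⟨Finsupp.single ⟨{i}, hsing⟩ 1, single_mem_Mm _ ?_, ?_⟩
    · intro j hj
      rw [Finset.mem_singleton.1 hj]
      exact him
    · rw [Kd_single, one_smul, Esing]
      rw [Finset.sum_eq_single_of_mem i (Finset.mem_univ i)]
      · rw [dif_pos (show i ∈ ({i} : Finset (Fin n)) from Finset.mem_singleton_self i)]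
        have h2 : (sgn ({i} : Finset (Fin n)) i : R) = 1 := by
          rw [sgn, Finset.filter_singleton, if_neg (lt_irrefl i), Finset.card_empty, pow_zero]
        rw [KIdx0_eq (KIdx.erase ⟨{i}, hsing⟩ i (Finset.mem_singleton_self i)), h2, one_mul,
          Finsupp.smul_single, smul_eq_mul, mul_one]
        rfl
      · intro j _ hji
        rw [dif_neg]
        intro hj
        exact hji (Finset.mem_singleton.1 hj)
  obtain ⟨c, hc, hKc⟩ := hle hr
  exact ⟨c, hc, hKc⟩

/-! ### Main combinatorial exactness -/

lemma comb_exact (hr : ∀ (k : Fin n) (β : R), x k * β ∈ Jm x (k : ℕ) → β ∈ Jm x (k : ℕ)) :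
    ∀ m, m ≤ n → ∀ d : ℕ, ∀ z ∈ Mm (R := R) m (d+1), Kd x d z = 0 →
      ∃ w ∈ Mm m (d+1+1), Kd x (d+1) w = z := by
  intro m
  induction m with
  | zero =>
    intro _ d z hz _
    have hbot : Mm (R := R) (n := n) 0 (d+1) = ⊥ := by
      rw [Mm, Submodule.span_eq_bot]
      rintro f ⟨s, hs, rfl⟩
      obtain ⟨i, hi⟩ := Finset.card_pos.1 (by rw [s.2]; omega)
      exact absurd (hs i hi) (by omega)
    rw [hbot] at hz
    refine ⟨0, Submodule.zero_mem _, ?_⟩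
    rw [map_zero, (Submodule.mem_bot R).1 hz]
  | succ m ih =>
    intro hm1 d z hz h0
    have hmn : m < n := hm1
    set ℓ : Fin n := ⟨m, hmn⟩ with hℓ
    have hmℓ : (ℓ : ℕ) = m := rfl
    obtain ⟨a, ha, b, hb, rfl⟩ := Mm_succ_decomp ℓ hmℓ _ hz
    -- Find `c ∈ Mm m (d+1)` with `Kd x d c = b`, and simplify the equation.
    have key : (∃ c ∈ Mm (R := R) m (d+1), Kd x d c = b) ∧
        Kd x d a + ((-1 : R)^d * x ℓ) • b = 0 := by
      cases d with
      | zero =>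
        have heq : Kd x 0 a + x ℓ • b = 0 := by
          rw [map_add, Kd_lam_zero x ℓ hmℓ b hb] at h0
          exact h0
        have h1 : ev (Kd x 0 a) + x ℓ * ev b = 0 := by
          have h := congrArg ev heq
          rwa [map_add, map_smul, smul_eq_mul, map_zero] at h
        have h2 : x ℓ * ev b ∈ Jm x m := by
          rw [eq_neg_of_add_eq_zero_right h1]
          exact neg_mem (ev_Kd_mem_Jm x a ha)
        have h3 : ev b ∈ Jm x m := hr ℓ (ev b) h2
        obtain ⟨c, hc, hKc⟩ := exists_Kd_of_mem_Jm x h3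
        refine ⟨⟨c, hc, ?_⟩, ?_⟩
        · rw [hKc]
          exact (eq_single_ev b).symm
        · rw [pow_zero, one_mul]
          exact heq
      | succ q =>
        have h0' : Kd x (q+1) a + (((-1 : R)^(q+1) * x ℓ) • b + lam ℓ q (Kd x q b)) = 0 := by
          rw [map_add, Kd_lam x ℓ hmℓ b hb] at h0
          exact h0
        have hPi : lam ℓ q (Kd x q b) = 0 := by
          have h := congrArg (Pi' ℓ (q+1)) h0'
          rw [map_add, map_add, map_smul, map_zero,
            Pi'_eq_zero ℓ hmℓ _ (Kd_mem_Mm x a ha),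
            Pi'_eq_zero ℓ hmℓ b hb, smul_zero,
            Pi'_lam ℓ hmℓ _ (Kd_mem_Mm x b hb), zero_add, zero_add] at h
          exact h
        have hKb : Kd x q b = 0 := by
          have h := congrArg (mu ℓ q) hPi
          rwa [mu_lam ℓ hmℓ _ (Kd_mem_Mm x b hb), map_zero] at h
        obtain ⟨c, hc, hKc⟩ := ih (le_of_lt hmn) q b hb hKb
        refine ⟨⟨c, hc, hKc⟩, ?_⟩
        rw [hPi, add_zero] at h0'
        exact h0'
    obtain ⟨⟨c, hc, hKcb⟩, heq2⟩ := key
    have hKlam : Kd x (d+1) (lam ℓ (d+1) c) = ((-1 : R)^(d+1) * x ℓ) • c + lam ℓ d b := by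
      rw [Kd_lam x ℓ hmℓ c hc, hKcb]
    have ha' : a + ((-1 : R)^d * x ℓ) • c ∈ Mm (R := R) m (d+1) :=
      Submodule.add_mem _ ha (Submodule.smul_mem _ _ hc)
    have hKa' : Kd x d (a + ((-1 : R)^d * x ℓ) • c) = 0 := by
      rw [map_add, map_smul, hKcb]
      exact heq2
    obtain ⟨c'', hc'', hKc''⟩ := ih (le_of_lt hmn) d _ ha' hKa'
    refine ⟨c'' + lam ℓ (d+1) c, ?_, ?_⟩
    · exact Submodule.add_mem _ (Mm_mono (Nat.le_succ m) hc'')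
        (lam_mem ℓ hmℓ c hc)
    · rw [map_add, hKc'', hKlam]
      have hsgn : ((-1 : R)^d * x ℓ) • c + ((-1 : R)^(d+1) * x ℓ) • c = 0 := by
        rw [← add_smul]
        convert zero_smul R c
        rw [pow_succ]
        ring
      calc a + ((-1 : R)^d * x ℓ) • c + (((-1 : R)^(d+1) * x ℓ) • c + lam ℓ d b)
          = a + lam ℓ d b + (((-1 : R)^d * x ℓ) • c + ((-1 : R)^(d+1) * x ℓ) • c) := by abel
        _ = a + lam ℓ d b := by rw [hsgn, add_zero]

lemma Mm_top (d : ℕ) : Mm (R := R) (n := n) n d = ⊤ := by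
  rw [eq_top_iff]
  intro f hf
  clear hf
  induction f using Finsupp.induction_linear with
  | zero => exact Submodule.zero_mem _
  | add a b ha hb => exact Submodule.add_mem _ ha hb
  | single s r =>
    have : (Finsupp.single s r : KMod R n d) = r • Finsupp.single s 1 := by
      rw [Finsupp.smul_single, smul_eq_mul, mul_one]
    rw [this]
    exact Submodule.smul_mem _ _ (single_mem_Mm s fun i _ => i.isLt)

theorem comb_main (hr : ∀ (k : Fin n) (β : R), x k * β ∈ Jm x (k : ℕ) → β ∈ Jm x (k : ℕ))
    (d : ℕ) : LinearMap.range (Kd x (d+1)) = LinearMap.ker (Kd x d) := by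
  apply le_antisymm
  · rintro _ ⟨z, rfl⟩
    exact Kd_Kd x z
  · intro z hz
    obtain ⟨w, _, hw⟩ := comb_exact x hr n le_rfl d z
      (by rw [Mm_top]; exact Submodule.mem_top) hz
    exact ⟨w, hw⟩


section Bridge

open ExteriorAlgebra

variable {F : Type*} [AddCommGroup F] [Module R F] (b : Module.Basis (Fin n) R F)

noncomputable def W (d : ℕ) (s : KIdx n d) : ⋀[R]^d F :=
  wedge R d (fun k => b (s.1.orderEmbOfFin s.2 k))

lemma W_val (d : ℕ) (s : KIdx n d) :
    (W b d s : ExteriorAlgebra R F) = ιMulti R d (fun k => b (s.1.orderEmbOfFin s.2 k)) := rfl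

noncomputable def detF (d : ℕ) (t : KIdx n d) : F [⋀^Fin d]→ₗ[R] R :=
  (Matrix.detRowAlternating).compLinearMap
    (LinearMap.pi fun j => b.coord (t.1.orderEmbOfFin t.2 j))

lemma detF_apply (d : ℕ) (t s : KIdx n d) :
    detF b d t (fun k => b (s.1.orderEmbOfFin s.2 k)) = if s = t then 1 else 0 := by
  have hentry : ∀ i j : Fin d,
      b.coord (t.1.orderEmbOfFin t.2 j) (b (s.1.orderEmbOfFin s.2 i))
        = if s.1.orderEmbOfFin s.2 i = t.1.orderEmbOfFin t.2 j then (1 : R) else 0 := by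
    intro i j
    rw [Module.Basis.coord_apply, Module.Basis.repr_self, Finsupp.single_apply]
  by_cases hst : s = t
  · subst hst
    rw [if_pos rfl]
    have : (Matrix.of fun i j =>
        b.coord (s.1.orderEmbOfFin s.2 j) (b (s.1.orderEmbOfFin s.2 i)))
          = (1 : Matrix (Fin d) (Fin d) R) := by
      ext i j
      rw [Matrix.of_apply, hentry, Matrix.one_apply]
      by_cases hij : i = j
      · rw [if_pos hij, if_pos (by rw [hij])]
      · rw [if_neg hij, if_neg (fun h => hij ((s.1.orderEmbOfFin s.2).injective h))]
    calc detF b d s (fun k => b (s.1.orderEmbOfFin s.2 k))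
        = Matrix.det (Matrix.of fun i j =>
            b.coord (s.1.orderEmbOfFin s.2 j) (b (s.1.orderEmbOfFin s.2 i))) := rfl
      _ = 1 := by rw [this, Matrix.det_one]
  · rw [if_neg hst]
    have hnsub : ¬ t.1 ⊆ s.1 := by
      intro hsub
      exact hst (Subtype.ext (Finset.eq_of_subset_of_card_le hsub
        (by rw [s.2, t.2])).symm)
    obtain ⟨i0, hi0t, hi0s⟩ := Finset.not_subset.1 hnsub
    have : ∃ j0 : Fin d, t.1.orderEmbOfFin t.2 j0 = i0 := by
      have hr := Finset.range_orderEmbOfFin t.1 t.2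
      have : i0 ∈ Set.range (t.1.orderEmbOfFin t.2) := by rw [hr]; exact hi0t
      exact this
    obtain ⟨j0, hj0⟩ := this
    calc detF b d t (fun k => b (s.1.orderEmbOfFin s.2 k))
        = Matrix.det (Matrix.of fun i j =>
            b.coord (t.1.orderEmbOfFin t.2 j) (b (s.1.orderEmbOfFin s.2 i))) := rfl
      _ = 0 := by
          apply Matrix.det_eq_zero_of_column_eq_zero j0
          intro i
          rw [Matrix.of_apply, hentry, if_neg]
          rw [hj0]
          intro h
          exact hi0s (h ▸ Finset.orderEmbOfFin_mem s.1 s.2 i)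

lemma W_linearIndependent (d : ℕ) : LinearIndependent R (W b d) := by
  apply LinearIndependent.of_comp ((⋀[R]^d F).subtype)
  rw [Fintype.linearIndependent_iff]
  intro g hg t
  have hL := congrArg (liftAlternating
    (Function.update (fun i => (0 : F [⋀^Fin i]→ₗ[R] R)) d (detF b d t))) hg
  rw [map_sum, map_zero] at hL
  have : ∀ s : KIdx n d,
      liftAlternating (Function.update (fun i => (0 : F [⋀^Fin i]→ₗ[R] R)) d (detF b d t))
        (g s • ((⋀[R]^d F).subtype ∘ W b d) s)
      = if s = t then g s else 0 := by
    intro s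
    rw [map_smul]
    have : ((⋀[R]^d F).subtype ∘ W b d) s
        = ιMulti R d (fun k => b (s.1.orderEmbOfFin s.2 k)) := rfl
    rw [this, liftAlternating_apply_ιMulti, Function.update_self, detF_apply]
    by_cases hst : s = t
    · rw [if_pos hst, if_pos hst, smul_eq_mul, mul_one]
    · rw [if_neg hst, if_neg hst, smul_eq_mul, mul_zero]
  rw [Finset.sum_congr rfl fun s _ => this s, Finset.sum_ite_eq' Finset.univ t g,
    if_pos (Finset.mem_univ t)] at hL
  exact hL

lemma iMulti_mem_span (d : ℕ) (v : Fin d → F) :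
    ιMulti R d v ∈ Submodule.span R
      (Set.range fun s : KIdx n d =>
        (ιMulti R d fun k => b (s.1.orderEmbOfFin s.2 k) : ExteriorAlgebra R F)) := by
  have hv : ιMulti R d v = ιMulti R d (fun i => ∑ j : Fin n, b.repr (v i) j • b j) := by
    congr 1
    exact funext fun i => (b.sum_repr (v i)).symm
  rw [hv]
  have hexp : ιMulti R d (fun i => ∑ j : Fin n, b.repr (v i) j • b j)
      = ∑ r : Fin d → Fin n, (∏ i, b.repr (v i) (r i)) • ιMulti R d (fun i => b (r i)) := by
    rw [show (⇑(ιMulti R d (M := F)) : (Fin d → F) → ExteriorAlgebra R F)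
      = ⇑(ιMulti R d (M := F)).toMultilinearMap from rfl]
    rw [MultilinearMap.map_sum]
    refine Finset.sum_congr rfl fun r _ => ?_
    rw [MultilinearMap.map_smul_univ]
  rw [hexp]
  apply Submodule.sum_mem
  intro r _
  apply Submodule.smul_mem
  by_cases hinj : Function.Injective r
  · set s : KIdx n d := ⟨Finset.univ.image r, by
      rw [Finset.card_image_of_injective _ hinj, Finset.card_univ, Fintype.card_fin]⟩ with hs
    have hmem : ∀ k, r k ∈ s.1 := by
      intro k
      exact Finset.mem_image.2 ⟨k, Finset.mem_univ k, rfl⟩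
    set r' : Fin d → {a // a ∈ s.1} := fun k => ⟨r k, hmem k⟩ with hr'
    have hinj' : Function.Injective r' := by
      intro k k' h
      exact hinj (congrArg Subtype.val h)
    have hbij : Function.Bijective r' :=
      (Fintype.bijective_iff_injective_and_card r').2
        ⟨hinj', by rw [Fintype.card_coe, s.2, Fintype.card_fin]⟩
    set σ : Equiv.Perm (Fin d) :=
      (Equiv.ofBijective r' hbij).trans (s.1.orderIsoOfFin s.2).toEquiv.symm with hσ
    have hre : ∀ k, r k = s.1.orderEmbOfFin s.2 (σ k) := by
      intro k
      rw [← Finset.coe_orderIsoOfFin_apply]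
      simp [hσ, hr']
    have hper : (ιMulti R d (fun i => b (r i)) : ExteriorAlgebra R F)
        = Equiv.Perm.sign σ • ιMulti R d (fun k => b (s.1.orderEmbOfFin s.2 k)) := by
      have : (fun i => b (r i))
          = (fun k => b (s.1.orderEmbOfFin s.2 k)) ∘ σ := by
        funext k
        rw [Function.comp_apply, hre k]
      rw [this, AlternatingMap.map_perm]
    rw [hper]
    rcases Int.units_eq_one_or (Equiv.Perm.sign σ) with hsg | hsg
    · rw [hsg, one_smul]
      exact Submodule.subset_span ⟨s, rfl⟩
    · rw [hsg]
      have : ((-1 : ℤˣ) • ιMulti R d (fun k => b (s.1.orderEmbOfFin s.2 k))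
          : ExteriorAlgebra R F)
          = - ιMulti R d (fun k => b (s.1.orderEmbOfFin s.2 k)) := by
        rw [Units.smul_def]
        simp
      rw [this]
      exact Submodule.neg_mem _ (Submodule.subset_span ⟨s, rfl⟩)
  · obtain ⟨k, k', hkk', hne⟩ := Function.not_injective_iff.1 hinj
    rw [AlternatingMap.map_eq_zero_of_eq (ιMulti R d) (fun i => b (r i)) (i := k) (j := k') (congrArg b hkk') hne]
    exact Submodule.zero_mem _


lemma W_span (d : ℕ) : ⊤ ≤ Submodule.span R (Set.range (W b d)) := by
  have hWa : Submodule.span R (Set.range fun s : KIdx n d =>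
      (ιMulti R d fun k => b (s.1.orderEmbOfFin s.2 k) : ExteriorAlgebra R F))
      = (⋀[R]^d F : Submodule R (ExteriorAlgebra R F)) := by
    apply le_antisymm
    · rw [Submodule.span_le]
      rintro _ ⟨s, rfl⟩
      exact (W b d s).2
    · rw [← ιMulti_span_fixedDegree, Submodule.span_le]
      rintro _ ⟨v, rfl⟩
      exact iMulti_mem_span b d v
  have hmap : Submodule.map (⋀[R]^d F).subtype (Submodule.span R (Set.range (W b d)))
      = Submodule.map (⋀[R]^d F).subtype ⊤ := by
    rw [Submodule.map_span, Submodule.map_top, Submodule.range_subtype, ← Set.range_comp]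
    exact hWa
  exact le_of_eq (Submodule.map_injective_of_injective
    ((⋀[R]^d F).injective_subtype) hmap).symm

noncomputable def KB (d : ℕ) : Module.Basis (KIdx n d) R (⋀[R]^d F) :=
  Module.Basis.mk (W_linearIndependent b d) (W_span b d)

lemma KB_apply (d : ℕ) (s : KIdx n d) : KB b d s = W b d s := Module.Basis.mk_apply _ _ _

lemma emb_filter_card {d : ℕ} (s : KIdx n (d+1)) (j : Fin (d+1)) :
    (s.1.filter (· < s.1.orderEmbOfFin s.2 j)).card = (j : ℕ) := by
  have himg : s.1.filter (· < s.1.orderEmbOfFin s.2 j)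
      = (Finset.univ.filter (fun k : Fin (d+1) => k < j)).image (s.1.orderEmbOfFin s.2) := by
    ext a
    simp only [Finset.mem_filter, Finset.mem_image, Finset.mem_univ, true_and]
    constructor
    · rintro ⟨has, halt⟩
      have ha : a ∈ Set.range (s.1.orderEmbOfFin s.2) := by
        rw [Finset.range_orderEmbOfFin]
        exact has
      obtain ⟨k, rfl⟩ := ha
      exact ⟨k, (OrderEmbedding.lt_iff_lt _).1 halt, rfl⟩
    · rintro ⟨k, hk, rfl⟩
      exact ⟨Finset.orderEmbOfFin_mem _ _ _, (OrderEmbedding.lt_iff_lt _).2 hk⟩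
  rw [himg, Finset.card_image_of_injective _ (s.1.orderEmbOfFin s.2).injective]
  have huniv : Finset.univ.filter (fun k : Fin (d+1) => k < j) = Finset.Iio j := by
    ext k
    simp
  rw [huniv, Fin.card_Iio]

lemma emb_mem {d : ℕ} (s : KIdx n (d+1)) (j : Fin (d+1)) :
    s.1.orderEmbOfFin s.2 j ∈ s.1 := Finset.orderEmbOfFin_mem _ _ _

lemma erase_emb {d : ℕ} (s : KIdx n (d+1)) (j : Fin (d+1)) (k : Fin d) :
    s.1.orderEmbOfFin s.2 (j.succAbove k)
      = (s.erase (s.1.orderEmbOfFin s.2 j) (emb_mem s j)).1.orderEmbOfFin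
          (s.erase (s.1.orderEmbOfFin s.2 j) (emb_mem s j)).2 k := by
  have heq := Finset.orderEmbOfFin_unique
    (f := fun k : Fin d => s.1.orderEmbOfFin s.2 (j.succAbove k))
    (s.erase (s.1.orderEmbOfFin s.2 j) (emb_mem s j)).2
    (fun l => Finset.mem_erase.2
      ⟨fun h => Fin.succAbove_ne j l ((s.1.orderEmbOfFin s.2).injective h), emb_mem s _⟩)
    ((s.1.orderEmbOfFin s.2).strictMono.comp (Fin.strictMono_succAbove j))
  exact congrFun heq k

lemma comm (φ : F →ₗ[R] R)
    (dK : ∀ d : ℕ, (⋀[R]^(d+1) F) →ₗ[R] (⋀[R]^d F))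
    (hdK : ∀ (d : ℕ) (v : Fin (d+1) → F),
      dK d (wedge R (d+1) v) =
        ∑ j : Fin (d+1), ((-1 : R)^(j : ℕ) * φ (v j)) •
          wedge R d (fun k => v (j.succAbove k)))
    (d : ℕ) :
    (dK d) ∘ₗ ((KB b (d+1)).repr.symm : KMod R n (d+1) →ₗ[R] (⋀[R]^(d+1) F))
      = (((KB b d).repr.symm : KMod R n d →ₗ[R] (⋀[R]^d F)) : KMod R n d →ₗ[R] (⋀[R]^d F))
          ∘ₗ Kd (fun i => φ (b i)) d := by
  apply Finsupp.lhom_ext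
  intro s r
  have hsm : (Finsupp.single s r : KMod R n (d+1)) = r • Finsupp.single s 1 := by
    rw [Finsupp.smul_single, smul_eq_mul, mul_one]
  rw [hsm, map_smul, map_smul]
  congr 1
  -- now on `single s 1`
  have hL : ((KB b (d+1)).repr.symm : KMod R n (d+1) →ₗ[R] (⋀[R]^(d+1) F))
      (Finsupp.single s 1) = W b (d+1) s := by
    rw [LinearEquiv.coe_coe, Module.Basis.repr_symm_single_one, KB_apply]
  rw [LinearMap.comp_apply, LinearMap.comp_apply, hL]
  have hWw : W b (d+1) s = wedge R (d+1) (fun k => b (s.1.orderEmbOfFin s.2 k)) := rfl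
  rw [hWw, hdK d (fun k => b (s.1.orderEmbOfFin s.2 k)), Kd_single, one_smul, Esing, map_sum]
  have hterm : ∀ i : Fin n,
      ((KB b d).repr.symm : KMod R n d →ₗ[R] (⋀[R]^d F))
        (if h : i ∈ s.1 then
          (sgn s.1 i * (fun i => φ (b i)) i) • Finsupp.single (s.erase i h) 1 else 0)
      = (if h : i ∈ s.1 then (sgn s.1 i * φ (b i)) • W b d (s.erase i h) else 0) := by
    intro i
    by_cases h : i ∈ s.1
    · rw [dif_pos h, dif_pos h, map_smul, LinearEquiv.coe_coe,
        Module.Basis.repr_symm_single_one, KB_apply]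
    · rw [dif_neg h, dif_neg h, map_zero]
  rw [Finset.sum_congr rfl fun i _ => hterm i]
  rw [show (∑ i : Fin n, if h : i ∈ s.1 then
      (sgn s.1 i * φ (b i)) • W b d (s.erase i h) else 0)
    = ∑ i ∈ s.1, (if h : i ∈ s.1 then
      (sgn s.1 i * φ (b i)) • W b d (s.erase i h) else 0) from
    (Finset.sum_subset (Finset.subset_univ s.1) (fun i _ hi => dif_neg hi)).symm]
  refine Finset.sum_bij (fun j _ => s.1.orderEmbOfFin s.2 j) ?_ ?_ ?_ ?_
  · intro j _
    exact emb_mem s j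
  · intro j _ j' _ h
    exact (s.1.orderEmbOfFin s.2).injective h
  · intro i hi
    have : i ∈ Set.range (s.1.orderEmbOfFin s.2) := by
      rw [Finset.range_orderEmbOfFin]
      exact hi
    obtain ⟨j, rfl⟩ := this
    exact ⟨j, Finset.mem_univ j, rfl⟩
  · intro j _
    rw [dif_pos (emb_mem s j)]
    have h1 : (sgn s.1 (s.1.orderEmbOfFin s.2 j) : R) = (-1 : R)^(j : ℕ) := by
      rw [sgn, emb_filter_card]
    have h2 : wedge R d (fun k => b (s.1.orderEmbOfFin s.2 (j.succAbove k)))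
        = W b d (s.erase (s.1.orderEmbOfFin s.2 j) (emb_mem s j)) := by
      unfold W
      congr 1
      funext k
      rw [erase_emb s j k]
    rw [h1, h2]

end Bridge

end KoszulAux


/-- If `φ : F → R` is a linear map from a finite free `R`-module sending a basis to a
regular sequence, then the Koszul complex `K(φ)` (whose `d`-th term is `⋀^d F` and whose
differentials are given by the usual Koszul formula) is exact in all positive homological
degrees. -/
theorem stmt_5 {R F : Type*} [CommRing R] [AddCommGroup F] [Module R F] {n : ℕ}
    (b : Module.Basis (Fin n) R F) (φ : F →ₗ[R] R)
    (hreg : RingTheory.Sequence.IsRegular R (List.ofFn fun i => φ (b i)))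
    (dK : ∀ d : ℕ, (⋀[R]^(d+1) F) →ₗ[R] (⋀[R]^d F))
    (hdK : ∀ (d : ℕ) (v : Fin (d+1) → F),
      dK d (wedge R (d+1) v) =
        ∑ j : Fin (d+1), ((-1 : R)^(j : ℕ) * φ (v j)) •
          wedge R d (fun k => v (j.succAbove k))) :
    ∀ d : ℕ, LinearMap.range (dK (d+1)) = LinearMap.ker (dK d) := by
  intro d
  classical
  set x : Fin n → R := fun i => φ (b i) with hx
  -- regularity in the form we need
  have hr : ∀ (k : Fin n) (β : R), x k * β ∈ KoszulAux.Jm x (k : ℕ) → β ∈ KoszulAux.Jm x (k : ℕ) := by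
    intro k β hkβ
    have hlen : (List.ofFn x).length = n := List.length_ofFn
    have hw := hreg.toIsWeaklyRegular.regular_mod_prev (k : ℕ) (by rw [hlen]; exact k.isLt)
    have hNJ : (Ideal.ofList ((List.ofFn x).take (k : ℕ)) • ⊤ : Submodule R R)
        = KoszulAux.Jm x (k : ℕ) := by
      rw [smul_eq_mul, Ideal.mul_top]
      have hset : {r : R | r ∈ (List.ofFn x).take (k : ℕ)}
          = {r : R | ∃ i : Fin n, (i : ℕ) < (k : ℕ) ∧ r = x i} := by
        ext r
        simp only [Set.mem_setOf_eq]
        constructor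
        · intro hrmem
          obtain ⟨i, hi, hgi⟩ := List.mem_iff_getElem.1 hrmem
          have hi' : i < n := by
            have := hi
            simp only [List.length_take, hlen] at this
            omega
          have hik : i < (k : ℕ) := by
            have := hi
            simp only [List.length_take, hlen] at this
            omega
          refine ⟨⟨i, hi'⟩, hik, ?_⟩
          rw [← hgi, List.getElem_take, List.getElem_ofFn]
        · rintro ⟨i, hik, rfl⟩
          apply List.mem_iff_getElem.2
          refine ⟨(i : ℕ), ?_, ?_⟩
          · simp only [List.length_take, hlen]
            omega
          · rw [List.getElem_take, List.getElem_ofFn]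
      exact congrArg Ideal.span hset
    have hw' : IsSMulRegular (R ⧸ (Ideal.ofList ((List.ofFn x).take (k : ℕ)) • ⊤ :
        Submodule R R)) (x k) := by
      have hg : (List.ofFn x)[(k : ℕ)]'(by rw [hlen]; exact k.isLt) = x k := by
        rw [List.getElem_ofFn]
      rw [← hg]
      exact hw
    have hmem := mem_of_isSMulRegular_quotient_of_smul_mem hw'
      (show x k • β ∈ _ by rw [hNJ]; rwa [smul_eq_mul])
    rwa [hNJ] at hmem
  have key := KoszulAux.comb_main x hr d
  have hcomm := KoszulAux.comm b φ dK hdK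
  have hc' : ∀ (e : ℕ) (c : KoszulAux.KMod R n (e+1)),
      dK e ((KoszulAux.KB b (e+1)).repr.symm c) = (KoszulAux.KB b e).repr.symm (KoszulAux.Kd x e c) := by
    intro e c
    have h := LinearMap.congr_fun (hcomm e) c
    simpa only [LinearMap.comp_apply, LinearEquiv.coe_coe] using h
  apply le_antisymm
  · rintro _ ⟨w, rfl⟩
    rw [LinearMap.mem_ker]
    have hw : w = (KoszulAux.KB b (d+1+1)).repr.symm ((KoszulAux.KB b (d+1+1)).repr w) :=
      (LinearEquiv.symm_apply_apply _ _).symm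
    rw [hw, hc' (d+1), hc' d, KoszulAux.Kd_Kd]
    exact LinearEquiv.map_zero _
  · intro z hz
    have hz0 : dK d z = 0 := hz
    have h1 : dK d ((KoszulAux.KB b (d+1)).repr.symm ((KoszulAux.KB b (d+1)).repr z)) = 0 := by
      rw [LinearEquiv.symm_apply_apply]
      exact hz0
    rw [hc' d] at h1
    have h2 : KoszulAux.Kd x d ((KoszulAux.KB b (d+1)).repr z) = 0 :=
      (LinearEquiv.map_eq_zero_iff _).1 h1
    have hmem : (KoszulAux.KB b (d+1)).repr z ∈ LinearMap.range (KoszulAux.Kd x (d+1)) := by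
      rw [key]
      exact LinearMap.mem_ker.2 h2
    obtain ⟨w, hw⟩ := hmem
    refine ⟨(KoszulAux.KB b (d+1+1)).repr.symm w, ?_⟩
    rw [hc' (d+1), hw, LinearEquiv.symm_apply_apply]
end

section
/- For natural numbers d ≥ 1 and i ≥ 0, the number of subsets of size i of the set of strictly monotone maps Fin d → Fin w, summed appropriately, satisfies: ((w choose d) choose i) = Σ_{v} c_v · (w choose v), where c_v is the number of i-element sets {ε₁ < ⋯ < ε_i} of strictly monotone maps Fin d → Fin v whose images jointly cover Fin v; the sum ranges over v with w₀ ≤ v ≤ d·i, where w₀ = min{v : (v choose d) ≥ i}, and this holds for all w ≥ 0. -/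
open Finset

/-- Strictly monotone maps `Fin d → Fin v` correspond to `d`-subsets of `Fin v`. -/
lemma aux_card_sm (d v : ℕ) :
    Fintype.card {f : Fin d → Fin v // StrictMono f} = Nat.choose v d := by
  classical
  have e : {f : Fin d → Fin v // StrictMono f} ≃ {s : Finset (Fin v) // s.card = d} :=
    { toFun := fun f => ⟨Finset.image f.1 Finset.univ, by
        rw [Finset.card_image_of_injective _ f.2.injective, Finset.card_univ, Fintype.card_fin]⟩
      invFun := fun s => ⟨⇑(s.1.orderEmbOfFin s.2), (s.1.orderEmbOfFin s.2).strictMono⟩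
      left_inv := fun f => by
        refine Subtype.ext ?_
        exact (Finset.orderEmbOfFin_unique _ (fun x => Finset.mem_image_of_mem _ (mem_univ x))
          f.2).symm
      right_inv := fun s => by
        refine Subtype.ext ?_
        rw [← Finset.coe_inj, Finset.coe_image, Finset.coe_univ, Set.image_univ,
          Finset.range_orderEmbOfFin] }
  rw [Fintype.card_congr e, Fintype.card_finset_len, Fintype.card_fin]


/-- The number of `i`-element sets of strictly monotone maps `Fin d → Fin w`. -/
lemma aux_card_B (d i w : ℕ) :
    Fintype.card {S : Finset (Fin d → Fin w) // S.card = i ∧ ∀ f ∈ S, StrictMono f} =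
      Nat.choose (Nat.choose w d) i := by
  classical
  rw [Fintype.card_subtype]
  have h1 : (Finset.univ.filter (fun S : Finset (Fin d → Fin w) =>
        S.card = i ∧ ∀ f ∈ S, StrictMono f)) =
      (Finset.univ.filter (fun f : Fin d → Fin w => StrictMono f)).powersetCard i := by
    ext S
    simp only [Finset.mem_filter, Finset.mem_univ, true_and, Finset.mem_powersetCard,
      Finset.subset_iff]
    constructor
    · rintro ⟨h, h'⟩
      exact ⟨fun f hf => by simp [h' f hf], h⟩
    · rintro ⟨h, h'⟩
      refine ⟨h', fun f hf => ?_⟩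
      have := h f hf
      exact this
  rw [h1, Finset.card_powersetCard]
  congr 1
  rw [← aux_card_sm d w, Fintype.card_subtype]

/-- The fiber of the union-of-images map over `T` is in bijection with covering sets. -/
lemma aux_fiber (d i w : ℕ) (T : Finset (Fin w)) :
    Fintype.card {S : {S : Finset (Fin d → Fin w) // S.card = i ∧ ∀ f ∈ S, StrictMono f} //
        S.1.biUnion (fun f => Finset.image f Finset.univ) = T} =
      Fintype.card {S : Finset (Fin d → Fin T.card) // S.card = i ∧ (∀ f ∈ S, StrictMono f) ∧
        ∀ x : Fin T.card, ∃ f ∈ S, ∃ y, f y = x} := by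
  classical
  set e := T.orderIsoOfFin rfl with he
  set push : (Fin d → Fin T.card) → (Fin d → Fin w) := fun f y => (e (f y) : Fin w) with hpush
  have push_inj : Function.Injective push := by
    intro f g h
    funext y
    exact e.injective (Subtype.ext (congrFun h y))
  have push_mono : ∀ f : Fin d → Fin T.card, StrictMono f → StrictMono (push f) := by
    intro f hf a b hab
    exact Subtype.coe_lt_coe.2 (e.strictMono (hf hab))
  let Φ : {S : Finset (Fin d → Fin T.card) // S.card = i ∧ (∀ f ∈ S, StrictMono f) ∧
        ∀ x : Fin T.card, ∃ f ∈ S, ∃ y, f y = x} →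
      {S : {S : Finset (Fin d → Fin w) // S.card = i ∧ ∀ f ∈ S, StrictMono f} //
        S.1.biUnion (fun f => Finset.image f Finset.univ) = T} :=
    fun S => ⟨⟨S.1.image push, by
        rw [Finset.card_image_of_injective _ push_inj, S.2.1], by
        intro g hg
        obtain ⟨f, hf, rfl⟩ := Finset.mem_image.1 hg
        exact push_mono f (S.2.2.1 f hf)⟩, by
      ext x
      simp only [Finset.mem_biUnion, Finset.mem_image, Finset.mem_univ, true_and]
      constructor
      · rintro ⟨g, ⟨f, hf, rfl⟩, y, rfl⟩
        exact (e (f y)).2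
      · intro hx
        obtain ⟨f, hf, y, hfy⟩ := S.2.2.2 (e.symm ⟨x, hx⟩)
        refine ⟨push f, ⟨f, hf, rfl⟩, y, ?_⟩
        show (e (f y) : Fin w) = x
        rw [hfy, OrderIso.apply_symm_apply]⟩
  refine (Fintype.card_of_bijective (f := Φ) ⟨?_, ?_⟩).symm
  · -- injectivity
    intro S S' h
    have h2 : Finset.image push S.1 = Finset.image push S'.1 :=
      congrArg (fun z => (z.1.1 : Finset (Fin d → Fin w))) h
    exact Subtype.ext (Finset.image_injective push_inj h2)
  · -- surjectivity
    rintro ⟨⟨S, hcard, hmono⟩, hU0⟩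
    have hU : S.biUnion (fun f => Finset.image f Finset.univ) = T := hU0
    have hmemT : ∀ f ∈ S, ∀ y, f y ∈ T := by
      intro f hf y
      rw [← hU]
      exact Finset.mem_biUnion.2 ⟨f, hf, Finset.mem_image_of_mem _ (Finset.mem_univ y)⟩
    set pull : {f // f ∈ S} → (Fin d → Fin T.card) :=
      fun fh y => e.symm ⟨fh.1 y, hmemT _ fh.2 y⟩ with hpull
    have pull_inj : Function.Injective pull := by
      intro a b h
      refine Subtype.ext (funext fun y => ?_)
      have := congrFun h y
      have h2 := e.symm.injective this
      exact congrArg Subtype.val h2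
    have key : ∀ fh : {f // f ∈ S}, push (pull fh) = fh.1 := by
      intro fh
      funext y
      show (e (e.symm ⟨fh.1 y, hmemT _ fh.2 y⟩) : Fin w) = fh.1 y
      rw [OrderIso.apply_symm_apply]
    refine ⟨⟨S.attach.image pull, ?_, ?_, ?_⟩, ?_⟩
    · rw [Finset.card_image_of_injective _ pull_inj, Finset.card_attach, hcard]
    · intro g hg
      obtain ⟨fh, _, rfl⟩ := Finset.mem_image.1 hg
      intro a b hab
      exact e.symm.strictMono (Subtype.mk_lt_mk.2 (hmono _ fh.2 hab))
    · intro x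
      have hxT : (e x : Fin w) ∈ S.biUnion (fun f => Finset.image f Finset.univ) := by
        rw [hU]; exact (e x).2
      obtain ⟨f, hf, hfy⟩ := Finset.mem_biUnion.1 hxT
      obtain ⟨y, -, hy⟩ := Finset.mem_image.1 hfy
      refine ⟨pull ⟨f, hf⟩, Finset.mem_image_of_mem _ (Finset.mem_attach _ _), y, ?_⟩
      show e.symm ⟨f y, _⟩ = x
      have : (⟨f y, hmemT _ hf y⟩ : {a // a ∈ T}) = e x := Subtype.ext hy
      rw [this, OrderIso.symm_apply_apply]
    · refine Subtype.ext (Subtype.ext ?_)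
      show (S.attach.image pull).image push = S
      rw [Finset.image_image]
      have h2 : Finset.image (push ∘ pull) S.attach = Finset.image Subtype.val S.attach :=
        Finset.image_congr (fun fh _ => key fh)
      rw [h2]
      exact Finset.attach_image_val

lemma aux_vanish (d i v : ℕ) (h : Nat.choose v d < i ∨ d * i < v) :
    Nat.card {S : Finset (Fin d → Fin v) // S.card = i ∧ (∀ f ∈ S, StrictMono f) ∧
      ∀ x : Fin v, ∃ f ∈ S, ∃ y, f y = x} = 0 := by
  classical
  rw [Nat.card_eq_fintype_card, Fintype.card_eq_zero_iff]
  constructor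
  rintro ⟨S, hcard, hmono, hcov⟩
  rcases h with h | h
  · have hsub : S ⊆ Finset.univ.filter (fun f : Fin d → Fin v => StrictMono f) := by
      intro f hf
      simp only [Finset.mem_filter, Finset.mem_univ, true_and]
      exact hmono f hf
    have hle := Finset.card_le_card hsub
    have hcf : (Finset.univ.filter (fun f : Fin d → Fin v => StrictMono f)).card =
        Nat.choose v d := by
      rw [← aux_card_sm d v, Fintype.card_subtype]
    rw [hcard, hcf] at hle
    omega
  · have h1 : (Finset.univ : Finset (Fin v)) ⊆
        S.biUnion (fun f => Finset.image f Finset.univ) := by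
      intro x _
      obtain ⟨f, hf, y, hfy⟩ := hcov x
      exact Finset.mem_biUnion.2 ⟨f, hf, Finset.mem_image.2 ⟨y, Finset.mem_univ y, hfy⟩⟩
    have h2 := Finset.card_le_card h1
    have h3 := Finset.card_biUnion_le (s := S) (t := fun f => Finset.image f Finset.univ)
    have h5 : ∑ f ∈ S, (Finset.image f Finset.univ).card ≤ ∑ _f ∈ S, d :=
      Finset.sum_le_sum (fun f _ => le_trans Finset.card_image_le (by simp))
    rw [Finset.sum_const, hcard, smul_eq_mul] at h5
    rw [Finset.card_univ, Fintype.card_fin] at h2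
    have hvi := le_trans h2 (le_trans h3 h5)
    have : i * d = d * i := Nat.mul_comm i d
    omega

lemma aux_card_B' (d i w : ℕ) :
    Nat.card {S : Finset (Fin d → Fin w) // S.card = i ∧ ∀ f ∈ S, StrictMono f} =
      Nat.choose (Nat.choose w d) i := by
  classical
  rw [Nat.card_eq_fintype_card, aux_card_B]

lemma aux_fiber' (d i w : ℕ) (T : Finset (Fin w)) :
    Nat.card {S : {S : Finset (Fin d → Fin w) // S.card = i ∧ ∀ f ∈ S, StrictMono f} //
        S.1.biUnion (fun f => Finset.image f Finset.univ) = T} =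
      Nat.card {S : Finset (Fin d → Fin T.card) // S.card = i ∧ (∀ f ∈ S, StrictMono f) ∧
        ∀ x : Fin T.card, ∃ f ∈ S, ∃ y, f y = x} := by
  classical
  rw [Nat.card_eq_fintype_card, Nat.card_eq_fintype_card, aux_fiber]

/-- Rank identity for the decomposition of the `i`-th exterior power of the rank-1 free
OI-module `F^{OI,d}`: `((w choose d) choose i) = Σ_v c_v (w choose v)`, where `c_v` counts
`i`-element sets of strictly monotone maps `Fin d → Fin v` whose images jointly cover
`Fin v`, and `v` ranges from `w₀ = min {v : (v choose d) ≥ i}` to `d·i`. -/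
theorem stmt_9 (d i : ℕ) (hd : 1 ≤ d) (c : ℕ → ℕ)
    (hc : ∀ v, c v = Nat.card {S : Finset (Fin d → Fin v) //
      S.card = i ∧ (∀ f ∈ S, StrictMono f) ∧ ∀ x : Fin v, ∃ f ∈ S, ∃ y, f y = x})
    (w₀ : ℕ) (hw₀ : w₀ = sInf {v : ℕ | i ≤ Nat.choose v d}) :
    ∀ w : ℕ, Nat.choose (Nat.choose w d) i =
      ∑ v ∈ Finset.Icc w₀ (d * i), c v * Nat.choose w v := by
  intro w
  classical
  set g : {S : Finset (Fin d → Fin w) // S.card = i ∧ ∀ f ∈ S, StrictMono f} →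
      Finset (Fin w) := fun S => S.1.biUnion (fun f => Finset.image f Finset.univ) with hg
  -- Step 1: total count as a sum over fibers
  have step1 : Nat.choose (Nat.choose w d) i = ∑ T : Finset (Fin w), c T.card := by
    rw [← aux_card_B' d i w, Nat.card_eq_fintype_card,
      Fintype.card_congr (Equiv.sigmaFiberEquiv g).symm, Fintype.card_sigma]
    refine Finset.sum_congr rfl (fun T _ => ?_)
    rw [← Nat.card_eq_fintype_card, aux_fiber' d i w T, ← hc]
  -- Step 2: group by cardinality
  have step2 : ∑ T : Finset (Fin w), c T.card =
      ∑ m ∈ Finset.range (w + 1), Nat.choose w m * c m := by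
    rw [← Finset.powerset_univ, Finset.sum_powerset_apply_card]
    simp [Finset.card_univ, mul_comm]
  -- vanishing of c outside [w₀, d*i]
  have hvan : ∀ v, v < w₀ ∨ d * i < v → c v = 0 := by
    intro v hv
    rw [hc v]
    refine aux_vanish d i v ?_
    rcases hv with hv | hv
    · left
      by_contra hcon
      push_neg at hcon
      have : v ∈ {v : ℕ | i ≤ Nat.choose v d} := hcon
      have := Nat.sInf_le this
      omega
    · right; exact hv
  -- Step 3: compare the two index ranges
  set N := w + d * i + 1 with hN
  have step3 : ∑ m ∈ Finset.range (w + 1), Nat.choose w m * c m =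
      ∑ m ∈ Finset.range N, Nat.choose w m * c m := by
    refine Finset.sum_subset (Finset.range_subset_range.2 (by omega)) ?_
    intro m hm hm'
    have : w < m := by
      simp only [Finset.mem_range] at hm hm'
      omega
    rw [Nat.choose_eq_zero_of_lt this, zero_mul]
  have step4 : ∑ v ∈ Finset.Icc w₀ (d * i), c v * Nat.choose w v =
      ∑ v ∈ Finset.range N, c v * Nat.choose w v := by
    refine Finset.sum_subset ?_ ?_
    · intro v hv
      rw [Finset.mem_Icc] at hv
      rw [Finset.mem_range]
      omega
    · intro v hv hv'
      rw [Finset.mem_range] at hv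
      rw [Finset.mem_Icc] at hv'
      push_neg at hv'
      have : c v = 0 := by
        rcases Nat.lt_or_ge v w₀ with h | h
        · exact hvan v (Or.inl h)
        · exact hvan v (Or.inr (hv' h))
      rw [this, zero_mul]
  rw [step1, step2, step3, step4]
  exact Finset.sum_congr rfl (fun v _ => Nat.mul_comm _ _)
end
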